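/- In 𝓑(p,q), with z₁ = L_{−μ₀+1,0} and z₂ = L_{−μ₀,0} for a fixed integer μ₀ ≤ −1, and positive integers l₁, l₂ with α = l₁(1−μ₀) − l₂μ₀, the iterated bracket satisfies ad_{z₂}^{l₂−1} ad_{z₁}^{l₁}(z₂) = q^{l₁+l₂−1} · ∏_{i=1}^{l₁} (−(i−1)μ₀ + i − 2) · ∏_{j=1}^{l₂−1} (−(l₁+j−1)μ₀ + l₁) · L_{α,0}. -/

import Mathlib

/-- The Block type Lie algebra `𝓑(p,q)`: underlying space is
`(ℤ × ℕ →₀ ℂ) × ℂ`, where `L_{α,i} = (single (α,i) 1, 0)` and the central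
element `c = (0, 1)`.  The bracket is
`[L_{α,i}, L_{β,j}] = ((i+q)(β+p) − (j+q)(α+p)) L_{α+β,i+j}
  + δ_{α+β,0} δ_{i,0} δ_{j,0} (α³−α)/12 · c`, with `c` central. -/
noncomputable def BpqBracket (p q : ℂ) (X Y : (ℤ × ℕ →₀ ℂ) × ℂ) : (ℤ × ℕ →₀ ℂ) × ℂ :=
  (X.1.sum fun a x => Y.1.sum fun b y =>
      Finsupp.single (a.1 + b.1, a.2 + b.2)
        (x * y * (((a.2 : ℂ) + q) * ((b.1 : ℂ) + p) - ((b.2 : ℂ) + q) * ((a.1 : ℂ) + p))),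
    X.1.sum fun a x => Y.1.sum fun b y =>
      x * y * (if a.1 + b.1 = 0 ∧ a.2 = 0 ∧ b.2 = 0
        then (((a.1 : ℂ)) ^ 3 - (a.1 : ℂ)) / 12 else 0))

lemma bracket_single (p q : ℂ) (β γ : ℤ) (c : ℂ) (h : β + γ ≠ 0) :
    BpqBracket p q (Finsupp.single (β, 0) 1, 0) (Finsupp.single (γ, 0) c, 0)
      = (Finsupp.single (β + γ, 0) (c * (q * ((γ : ℂ) - β))), 0) := by
  unfold BpqBracket
  simp only [Finsupp.sum_single_index, zero_mul, one_mul, mul_zero, Finsupp.single_zero,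
    Finsupp.sum_fun_zero]
  refine Prod.ext ?_ ?_
  · simp only []
    congr 1
    push_cast
    ring
  · simp [h]

lemma iter_single (p q : ℂ) (β γ : ℤ) (hβ : 1 ≤ β) (hγ : 1 ≤ γ) (c : ℂ) (k : ℕ) :
    (fun Y => BpqBracket p q (Finsupp.single (β, 0) 1, 0) Y)^[k]
        (Finsupp.single (γ, 0) c, 0)
      = (Finsupp.single (γ + k * β, 0)
          (c * ∏ i ∈ Finset.range k, (q * ((γ : ℂ) + i * β - β))), 0) := by
  induction k with
  | zero => simp
  | succ k ih =>
    rw [Function.iterate_succ_apply', ih, bracket_single p q β (γ + k * β) _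
      (by positivity)]
    rw [Finset.prod_range_succ]
    refine Prod.ext ?_ rfl
    simp only []
    have h1 : β + (γ + (k : ℤ) * β) = γ + ((k : ℕ) + 1 : ℕ) * β := by push_cast; ring
    rw [h1]
    congr 1
    push_cast
    ring


/-- In `𝓑(p,q)`, with `z₁ = L_{−μ₀+1,0}` and `z₂ = L_{−μ₀,0}` for a fixed integer
`μ₀ ≤ −1`, and positive integers `l₁, l₂` with `α = l₁(1−μ₀) − l₂μ₀`, one has
`ad_{z₂}^{l₂−1} ad_{z₁}^{l₁}(z₂)
  = q^{l₁+l₂−1} ∏_{i=1}^{l₁} (−(i−1)μ₀+i−2) ∏_{j=1}^{l₂−1} (−(l₁+j−1)μ₀+l₁) · L_{α,0}`. -/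
theorem stmt10 (p q : ℂ) (hp : p ≠ 0) (hq : q ≠ 0)
    (μ₀ : ℤ) (hμ : μ₀ ≤ -1) (l₁ l₂ : ℕ) (hl₁ : 1 ≤ l₁) (hl₂ : 1 ≤ l₂)
    (α : ℤ) (hα : α = (l₁ : ℤ) * (1 - μ₀) - (l₂ : ℤ) * μ₀) :
    (fun Y => BpqBracket p q (Finsupp.single (-μ₀, 0) 1, 0) Y)^[l₂ - 1]
        ((fun Y => BpqBracket p q (Finsupp.single (-μ₀ + 1, 0) 1, 0) Y)^[l₁]
          (Finsupp.single (-μ₀, 0) 1, 0))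
      = (q ^ (l₁ + l₂ - 1)
          * (∏ i ∈ Finset.range l₁, (-(i : ℂ) * (μ₀ : ℂ) + (i : ℂ) - 1))
          * (∏ j ∈ Finset.range (l₂ - 1), (-((l₁ : ℂ) + (j : ℂ)) * (μ₀ : ℂ) + (l₁ : ℂ))))
        • ((Finsupp.single (α, 0) 1 : ℤ × ℕ →₀ ℂ), (0 : ℂ)) := by
  have h1 : (1 : ℤ) ≤ -μ₀ + 1 := by omega
  have h2 : (1 : ℤ) ≤ -μ₀ := by omega
  have h3 : (1 : ℤ) ≤ -μ₀ + (l₁ : ℤ) * (-μ₀ + 1) := by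
    have := mul_nonneg (Int.natCast_nonneg l₁) (by omega : (0:ℤ) ≤ -μ₀ + 1)
    omega
  rw [iter_single p q _ _ h1 h2 1 l₁, iter_single p q _ _ h2 h3 _ (l₂ - 1)]
  have hdeg : -μ₀ + (l₁ : ℤ) * (-μ₀ + 1) + ((l₂ - 1 : ℕ) : ℤ) * (-μ₀) = α := by
    rw [hα, Nat.cast_sub hl₂]; ring
  rw [hdeg]
  have hc1 : ∀ i ∈ Finset.range l₁,
      q * (((-μ₀ : ℤ) : ℂ) + (i : ℂ) * (((-μ₀ + 1 : ℤ)) : ℂ) - ((-μ₀ + 1 : ℤ) : ℂ))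
        = q * (-(i : ℂ) * (μ₀ : ℂ) + (i : ℂ) - 1) := by
    intro i _; push_cast; ring
  have hc2 : ∀ j ∈ Finset.range (l₂ - 1),
      q * (((-μ₀ + (l₁ : ℤ) * (-μ₀ + 1) : ℤ) : ℂ) + (j : ℂ) * ((-μ₀ : ℤ) : ℂ)
          - ((-μ₀ : ℤ) : ℂ))
        = q * (-((l₁ : ℂ) + (j : ℂ)) * (μ₀ : ℂ) + (l₁ : ℂ)) := by
    intro j _; push_cast; ring
  rw [Finset.prod_congr rfl hc1, Finset.prod_congr rfl hc2,
    Finset.prod_mul_distrib, Finset.prod_mul_distrib, Finset.prod_const, Finset.prod_const]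
  have hpow : q ^ l₁ * q ^ (l₂ - 1) = q ^ (l₁ + l₂ - 1) := by
    rw [← pow_add]; congr 1; omega
  refine Prod.ext ?_ ?_
  · simp only [Prod.smul_fst, Finsupp.smul_single', mul_one]
    congr 1
    rw [← hpow, Finset.card_range, Finset.card_range]
    generalize (∏ x ∈ Finset.range l₁, (-(x : ℂ) * (μ₀ : ℂ) + (x : ℂ) - 1)) = A
    generalize (∏ x ∈ Finset.range (l₂ - 1),
      (-((l₁ : ℂ) + (x : ℂ)) * (μ₀ : ℂ) + (l₁ : ℂ))) = B
    ring
  · simp
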